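/- Let A and B be torsion-free abelian groups such that G = A × B is fully transitive. Suppose x = (a, b) and y = (a₁, b₁) are elements of G such that χ(a) ≤ χ(b₁ − b) (heights of a computed in A and of b₁ − b computed in B) and χ(b₁) ≤ χ(a₁ − a) (heights of b₁ computed in B and of a₁ − a computed in A). Then there exists an automorphism φ of G with φ(x) = y. -/

import Mathlib

/-- `n` divides `x` in the group `G`. -/
def Divides {G : Type*} [AddCommGroup G] (n : ℕ) (x : G) : Prop :=
  ∃ z : G, n • z = x

/-- `χ(x) ≤ χ(y)`: every prime-power dividing `x` divides `y`. -/
def HeightLE {G H : Type*} [AddCommGroup G] [AddCommGroup H] (x : G) (y : H) : Prop :=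
  ∀ p k : ℕ, p.Prime → Divides (p ^ k) x → Divides (p ^ k) y

/-- `χ(x) = χ(y)`. -/
def HeightEq {G H : Type*} [AddCommGroup G] [AddCommGroup H] (x : G) (y : H) : Prop :=
  HeightLE x y ∧ HeightLE y x

def FullyTransitive (G : Type*) [AddCommGroup G] : Prop :=
  ∀ x y : G, HeightLE x y → ∃ φ : G →+ G, φ x = y

def KrylovTransitive (G : Type*) [AddCommGroup G] : Prop :=
  ∀ x y : G, HeightEq x y → ∃ φ : G →+ G, φ x = y

def TransitiveGrp (G : Type*) [AddCommGroup G] : Prop :=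
  ∀ x y : G, HeightEq x y → ∃ φ : G ≃+ G, φ x = y

def WeaklyTransitive (G : Type*) [AddCommGroup G] : Prop :=
  ∀ (x y : G) (φ ψ : G →+ G), φ x = y → ψ y = x → ∃ η : G ≃+ G, η x = y

def IsTorsionFreeGrp (G : Type*) [AddCommGroup G] : Prop :=
  ∀ (n : ℤ) (x : G), n ≠ 0 → n • x = 0 → x = 0

/-- `τ(x) ≤ τ(y)`. -/
def TypeLE {G H : Type*} [AddCommGroup G] [AddCommGroup H] (x : G) (y : H) : Prop :=
  ∃ n : ℤ, n ≠ 0 ∧ HeightLE x (n • y)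

/-- `τ(x) = τ(y)`. -/
def TypeEq {G H : Type*} [AddCommGroup G] [AddCommGroup H] (x : G) (y : H) : Prop :=
  TypeLE x y ∧ TypeLE y x

def Homogeneous (G : Type*) [AddCommGroup G] : Prop :=
  ∀ x y : G, x ≠ 0 → y ≠ 0 → TypeEq x y

/-- `π(G)`: primes `p` with `pG ≠ G`. -/
def piSet (G : Type*) [AddCommGroup G] : Set ℕ :=
  {p | p.Prime ∧ ¬ ∀ x : G, ∃ z : G, p • z = x}

def unipEquiv {G : Type*} [AddCommGroup G] (u : G →+ G) (h : ∀ x, u (u x) = 0) : G ≃+ G where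
  toFun x := x + u x
  invFun x := x - u x
  left_inv x := by simp [map_add, h x]
  right_inv x := by simp [map_sub, h x]
  map_add' x y := by simp only [map_add]; abel

theorem stmt_1 (A B : Type*) [AddCommGroup A] [AddCommGroup B]
    (hA : IsTorsionFreeGrp A) (hB : IsTorsionFreeGrp B)
    (hG : FullyTransitive (A × B))
    (a a₁ : A) (b b₁ : B)
    (h1 : HeightLE a (b₁ - b)) (h2 : HeightLE b₁ (a₁ - a)) :
    ∃ φ : (A × B) ≃+ (A × B), φ (a, b) = (a₁, b₁) := by
  obtain ⟨f, hf⟩ := hG ((a, 0) : A × B) ((0, b₁ - b) : A × B) (by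
    intro p k hp ⟨z, hz⟩
    obtain ⟨w, hw⟩ := h1 p k hp ⟨z.1, congrArg Prod.fst hz⟩
    exact ⟨(0, w), by simp [Prod.ext_iff, hw]⟩)
  obtain ⟨g, hg⟩ := hG ((0, b₁) : A × B) ((a₁ - a, 0) : A × B) (by
    intro p k hp ⟨z, hz⟩
    obtain ⟨w, hw⟩ := h2 p k hp ⟨z.2, congrArg Prod.snd hz⟩
    exact ⟨(w, 0), by simp [Prod.ext_iff, hw]⟩)
  set u : (A × B) →+ (A × B) :=
    ((AddMonoidHom.inr A B).comp ((AddMonoidHom.snd A B).comp f)).comp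
      ((AddMonoidHom.inl A B).comp (AddMonoidHom.fst A B)) with hu
  set v : (A × B) →+ (A × B) :=
    ((AddMonoidHom.inl A B).comp ((AddMonoidHom.fst A B).comp g)).comp
      ((AddMonoidHom.inr A B).comp (AddMonoidHom.snd A B)) with hv
  have hu2 : ∀ x, u (u x) = 0 := by intro x; simp [hu, show ((0, 0) : A × B) = 0 from rfl]
  have hv2 : ∀ x, v (v x) = 0 := by intro x; simp [hv, show ((0, 0) : A × B) = 0 from rfl]
  refine ⟨(unipEquiv u hu2).trans (unipEquiv v hv2), ?_⟩
  have e1 : unipEquiv u hu2 (a, b) = (a, b₁) := by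
    simp [unipEquiv, hu, hf, Prod.ext_iff]
  have e2 : unipEquiv v hv2 (a, b₁) = (a₁, b₁) := by
    simp [unipEquiv, hv, hg, Prod.ext_iff]
  simp [e1, e2]
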